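/- The translation (·)∘ from the λ̄μμ̃-calculus to the λμ-calculus preserves simple typing: if Γ ⊢ t : A | Δ is derivable in the λ̄μμ̃ type system, then Γ ⊢ t∘ : A | Δ is derivable in the λμ type system (and analogously, λ̄μμ̃-command judgments c : (Γ ⊢ Δ) and λ̄μμ̃-context judgments Γ | e : A ⊢ Δ are mapped to derivable λμ judgments c∘ : (Γ ⊢ Δ) and Γ | e∘ : A ⊢ Δ, possibly with extra fresh μ-variables declared in Δ). -/

import Mathlib

set_option autoImplicit true

namespace CHTyping

/-- Simple types `T ::= X | T → T`. -/
inductive Ty : Type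
  | base : ℕ → Ty
  | arr : Ty → Ty → Ty

/-- Typing environments: finite-domain assignments of simple types to
(named) variables, represented as partial functions. -/
abbrev Cx : Type := ℕ → Option Ty

/-- The empty environment. -/
def emp : Cx := fun _ => none

/-- The one-point environment `x : A`. -/
def single (x : ℕ) (A : Ty) : Cx := fun y => if y = x then some A else none

/-- Union `Γ, Γ'` of two environments (asserted compatible). -/
def union (Γ Γ' : Cx) : Cx := fun x => (Γ x).orElse (fun _ => Γ' x)

/-- Two environments match each other on the intersection of their domains. -/
def Compat (Γ Γ' : Cx) : Prop := ∀ x A B, Γ x = some A → Γ' x = some B → A = B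

/-- `Γ ∖ {x : A}`: removal of a variable from an environment. -/
def remove (Γ : Cx) (x : ℕ) : Cx := fun y => if y = x then none else Γ y

/-- `Γ, x : A`: extension of an environment. -/
def extend (Γ : Cx) (x : ℕ) (A : Ty) : Cx := fun y => if y = x then some A else Γ y

/-! ## The λμ-calculus (named variables) -/

mutual
  /-- λμ-terms `t ::= x | λx.t | t t | μα.c`. -/
  inductive Tm : Type
    | var : ℕ → Tm
    | abs : ℕ → Tm → Tm
    | app : Tm → Tm → Tm
    | mabs : ℕ → Cm → Tm
  /-- λμ-commands `c ::= [α]t`. -/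
  inductive Cm : Type
    | cmd : ℕ → Tm → Cm
end

/-- λμ-contexts `e ::= ⟨α⟩ | ⟨β⟩(t ·) | e · t`. -/
inductive Ct : Type
  | cvar : ℕ → Ct
  | push : ℕ → Tm → Ct
  | cons : Ct → Tm → Ct

/-- Filling a λμ-context with a term: `⟨α⟩⟨t⟩ = [α]t`,
`(⟨β⟩(u ·))⟨t⟩ = [β](u t)`, `(h · u)⟨t⟩ = h⟨t u⟩`. -/
def fill : Ct → Tm → Cm
  | .cvar a, t => .cmd a t
  | .push b u, t => .cmd b (.app u t)
  | .cons h u, t => fill h (.app t u)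

/-! ### The simple type system of λμ.
`TT Γ t A Δ` is the judgment `Γ ⊢ t : A | Δ`, `TC c Γ Δ` is
`c : (Γ ⊢ Δ)` and `TE Γ e A Δ` is `Γ | e : A ⊢ Δ`. -/

mutual
  inductive TT : Cx → Tm → Ty → Cx → Prop
    | var (x : ℕ) (A : Ty) : TT (single x A) (.var x) A emp
    | abs {Γ : Cx} {t : Tm} {B : Ty} {Δ : Cx} {x : ℕ} {A : Ty} :
        TT Γ t B Δ → (Γ x = some A ∨ Γ x = none) →
        TT (remove Γ x) (.abs x t) (.arr A B) Δ
    | app {Γ Γ' : Cx} {u v : Tm} {A B : Ty} {Δ Δ' : Cx} :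
        TT Γ u (.arr A B) Δ → TT Γ' v A Δ' → Compat Γ Γ' → Compat Δ Δ' →
        TT (union Γ Γ') (.app u v) B (union Δ Δ')
    | mabs {c : Cm} {Γ Δ : Cx} {a : ℕ} {A : Ty} :
        TC c Γ Δ → (Δ a = some A ∨ Δ a = none) →
        TT Γ (.mabs a c) A (remove Δ a)
  inductive TC : Cm → Cx → Cx → Prop
    | cmd {Γ : Cx} {t : Tm} {A : Ty} {Δ : Cx} {a : ℕ} :
        TT Γ t A Δ → (Δ a = some A ∨ Δ a = none) →
        TC (.cmd a t) Γ (extend Δ a A)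
end

inductive TE : Cx → Ct → Ty → Cx → Prop
  | cvar (a : ℕ) (A : Ty) : TE emp (.cvar a) A (single a A)
  | push {Γ : Cx} {t : Tm} {A B : Ty} {Δ : Cx} {b : ℕ} :
      TT Γ t (.arr A B) Δ → (Δ b = some B ∨ Δ b = none) →
      TE Γ (.push b t) A (extend Δ b B)
  | cons {Γ Γ' : Cx} {t : Tm} {e : Ct} {A B : Ty} {Δ Δ' : Cx} :
      TT Γ t A Δ → TE Γ' e B Δ' → Compat Γ Γ' → Compat Δ Δ' →
      TE (union Γ Γ') (.cons e t) (.arr A B) (union Δ Δ')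

/-! ## The λ̄μμ̃-calculus (named variables) -/

mutual
  /-- λ̄μμ̃-terms `t ::= x | λx.t | μα.c`. -/
  inductive BTm : Type
    | var : ℕ → BTm
    | abs : ℕ → BTm → BTm
    | mabs : ℕ → BCm → BTm
  /-- λ̄μμ̃-commands `c ::= ⟨t | e⟩`. -/
  inductive BCm : Type
    | cut : BTm → BCt → BCm
  /-- λ̄μμ̃-contexts `e ::= α | t · e | μ̃x.c`. -/
  inductive BCt : Type
    | cvar : ℕ → BCt
    | cons : BTm → BCt → BCt
    | tmu : ℕ → BCm → BCt
end

/-! ### The simple type system of λ̄μμ̃.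
`BT Γ t A Δ` is `Γ ⊢ t : A | Δ`, `BC c Γ Δ` is `c : (Γ ⊢ Δ)` and
`BE Γ e A Δ` is `Γ | e : A ⊢ Δ`. -/

mutual
  inductive BT : Cx → BTm → Ty → Cx → Prop
    | var (x : ℕ) (A : Ty) : BT (single x A) (.var x) A emp
    | abs {Γ : Cx} {t : BTm} {B : Ty} {Δ : Cx} {x : ℕ} {A : Ty} :
        BT Γ t B Δ → (Γ x = some A ∨ Γ x = none) →
        BT (remove Γ x) (.abs x t) (.arr A B) Δ
    | mabs {c : BCm} {Γ Δ : Cx} {a : ℕ} {A : Ty} :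
        BC c Γ Δ → (Δ a = some A ∨ Δ a = none) →
        BT Γ (.mabs a c) A (remove Δ a)
  inductive BC : BCm → Cx → Cx → Prop
    | cut {Γ Γ' : Cx} {t : BTm} {e : BCt} {A : Ty} {Δ Δ' : Cx} :
        BT Γ t A Δ → BE Γ' e A Δ' → Compat Γ Γ' → Compat Δ Δ' →
        BC (.cut t e) (union Γ Γ') (union Δ Δ')
  inductive BE : Cx → BCt → Ty → Cx → Prop
    | cvar (a : ℕ) (A : Ty) : BE emp (.cvar a) A (single a A)
    | cons {Γ Γ' : Cx} {t : BTm} {e : BCt} {A B : Ty} {Δ Δ' : Cx} :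
        BT Γ t A Δ → BE Γ' e B Δ' → Compat Γ Γ' → Compat Δ Δ' →
        BE (union Γ Γ') (.cons t e) (.arr A B) (union Δ Δ')
    | tmu {c : BCm} {Γ Δ : Cx} {x : ℕ} {A : Ty} :
        BC c Γ Δ → (Γ x = some A ∨ Γ x = none) →
        BE (remove Γ x) (.tmu x c) A Δ
end

/-! ### Fresh μ-variable names for the translation `(·)∘` -/

mutual
  /-- A strict upper bound on the μ-variable names occurring in a λμ-term. -/
  def fvMT : Tm → ℕ
    | .var _ => 0
    | .abs _ t => fvMT t
    | .app t u => max (fvMT t) (fvMT u)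
    | .mabs a c => max (a + 1) (fvMC c)
  def fvMC : Cm → ℕ
    | .cmd a t => max (a + 1) (fvMT t)
end

/-! ### The translation `(·)∘` from λ̄μμ̃ to λμ -/

mutual
  /-- `x∘ = x`, `(λx.u)∘ = λx.u∘`, `(μα.c)∘ = μα.c∘`. -/
  def circT : BTm → Tm
    | .var x => .var x
    | .abs x t => .abs x (circT t)
    | .mabs a c => .mabs a (circC c)
  /-- `⟨t | e⟩∘ = e∘⟨t∘⟩`. -/
  def circC : BCm → Cm
    | .cut t e => fill (circE e) (circT t)
  /-- `α∘ = ⟨α⟩`, `(t · h)∘ = h∘ · t∘`,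
  `(μ̃x.c)∘ = ⟨β⟩((λx.μδ.c∘) ·)` with `β, δ` fresh. -/
  def circE : BCt → Ct
    | .cvar a => .cvar a
    | .cons t e => .cons (circE e) (circT t)
    | .tmu x c =>
        let C := circC c
        .push (fvMC C + 1) (.abs x (.mabs (fvMC C) C))
end

/-- `Δ'` extends `Δ` by (possibly) declaring extra variables. -/
def Extends (Δ Δ' : Cx) : Prop := ∀ a A, Δ a = some A → Δ' a = some A

/-! ### Auxiliary material for the proof -/

section Aux

/-- A strict upper bound on the μ-variable names occurring in a λμ-context. -/
def fvME : Ct → ℕ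
  | .cvar a => a + 1
  | .push b t => max (b + 1) (fvMT t)
  | .cons h u => max (fvME h) (fvMT u)

lemma fvMC_fill : ∀ (e : Ct) (t : Tm), fvMC (fill e t) = max (fvME e) (fvMT t)
  | .cvar a, t => by simp [fill, fvMC, fvME]
  | .push b u, t => by simp [fill, fvMC, fvMT, fvME]
  | .cons h u, t => by
      have := fvMC_fill h (.app t u)
      simp [fill, fvME, fvMT] at *; omega

lemma compat_symm {Γ Γ' : Cx} (h : Compat Γ Γ') : Compat Γ' Γ :=
  fun x A B ha hb => (h x B A hb ha).symm

lemma union_eq_left {Δ₁ Δ₂ : Cx} {x : ℕ} {B : Ty} (h : Δ₁ x = some B) :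
    union Δ₁ Δ₂ x = some B := by simp [union, h]

lemma union_eq_right {Δ₁ Δ₂ : Cx} {x : ℕ} (h : Δ₁ x = none) :
    union Δ₁ Δ₂ x = Δ₂ x := by simp [union, h]

lemma union_cases {Δ₁ Δ₂ : Cx} {x : ℕ} {B : Ty} (h : union Δ₁ Δ₂ x = some B) :
    Δ₁ x = some B ∨ (Δ₁ x = none ∧ Δ₂ x = some B) := by
  cases h1 : Δ₁ x with
  | none => right; rw [union_eq_right h1] at h; exact ⟨rfl, h⟩
  | some C => left; rwa [union_eq_left h1] at h

lemma union_assoc (a b c : Cx) : union (union a b) c = union a (union b c) := by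
  funext x; cases h1 : a x <;> cases h2 : b x <;> simp [union, h1, h2]

lemma union_comm_of_compat {a b : Cx} (h : Compat a b) : union a b = union b a := by
  funext x
  cases h1 : a x with
  | none => cases h2 : b x <;> simp [union, h1, h2]
  | some A =>
    cases h2 : b x with
    | none => simp [union, h1, h2]
    | some B => have := h x A B h1 h2; simp [union, h1, h2, this]

lemma union_emp (Γ : Cx) : union Γ emp = Γ := by
  funext x; cases h : Γ x <;> simp [union, emp, h]

lemma compat_union_elim₁ {Γ Γ₁ Γ₂ : Cx} (h : Compat Γ (union Γ₁ Γ₂)) : Compat Γ Γ₁ :=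
  fun x A B hA hB => h x A B hA (union_eq_left hB)

lemma compat_union_elim₂ {Γ Γ₁ Γ₂ : Cx} (h : Compat Γ (union Γ₁ Γ₂))
    (h12 : Compat Γ₁ Γ₂) : Compat Γ Γ₂ := by
  intro x A B hA hB
  cases h1 : Γ₁ x with
  | none => exact h x A B hA (by rw [union_eq_right h1]; exact hB)
  | some C =>
    have := h12 x C B h1 hB
    exact (h x A C hA (union_eq_left h1)).trans this

lemma compat_union_intro {Γ Γ₁ Γ₂ : Cx} (h1 : Compat Γ Γ₂) (h2 : Compat Γ₁ Γ₂) :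
    Compat (union Γ Γ₁) Γ₂ := by
  intro x A B hA hB
  rcases union_cases hA with h | ⟨_, h⟩
  · exact h1 x A B h hB
  · exact h2 x A B h hB

/-- The key lemma: filling a typed λμ-context with a typed λμ-term gives a
typed command. -/
lemma fill_typed : ∀ {Γ' : Cx} {e : Ct} {A : Ty} {Δ' : Cx}, TE Γ' e A Δ' →
    ∀ {Γ : Cx} {t : Tm} {Δ : Cx}, TT Γ t A Δ → Compat Γ Γ' → Compat Δ Δ' →
    TC (fill e t) (union Γ Γ') (union Δ Δ') := by
  intro Γ' e A₀ Δ' hE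
  induction hE with
  | cvar a A =>
    intro Γ t Δ hT _ cΔ
    have ha : Δ a = some A ∨ Δ a = none := by
      cases h : Δ a with
      | none => exact Or.inr rfl
      | some B =>
        exact Or.inl (congrArg some (cΔ a B A h (by simp [single])))
    have h1 : union Γ emp = Γ := union_emp Γ
    have h2 : union Δ (single a A) = extend Δ a A := by
      funext y
      by_cases hy : y = a
      · subst hy
        rcases ha with h | h
        · rw [union_eq_left h]; simp [extend]
        · rw [union_eq_right h]; simp [extend, single]
      · have hs : single a A y = none := by simp [single, hy]
        cases hΔ : Δ y <;> simp [union, extend, hy, hΔ, hs]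
    rw [h1, h2]
    exact TC.cmd hT ha
  | @push Γ₀ u A B Δ₀ b hu hb =>
    intro Γ t Δ hT cΓ cΔ
    have cΔ₀ : Compat Δ₀ Δ := by
      intro y C D hC hD
      by_cases hy : y = b
      · have hCB : C = B := by
          rw [hy] at hC
          rcases hb with h | h
          · exact Option.some.inj (hC.symm.trans h)
          · rw [h] at hC; exact nomatch hC
        have hDB : D = B := cΔ y D B hD (by simp [extend, hy])
        rw [hCB, hDB]
      · have hD' : extend Δ₀ b B y = some C := by simp [extend, hy, hC]
        exact (cΔ y D C hD hD').symm
    have happ := TT.app hu hT (compat_symm cΓ) cΔ₀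
    have hcond : (union Δ₀ Δ) b = some B ∨ (union Δ₀ Δ) b = none := by
      rcases hb with h | h
      · exact Or.inl (union_eq_left h)
      · cases hD : Δ b with
        | none => exact Or.inr (by rw [union_eq_right h, hD])
        | some D =>
          exact Or.inl (by
            rw [union_eq_right h, hD, cΔ b D B hD (by simp [extend])])
    have hcmd := TC.cmd happ hcond
    have e1 : union Γ₀ Γ = union Γ Γ₀ := union_comm_of_compat (compat_symm cΓ)
    have e2 : extend (union Δ₀ Δ) b B = union Δ (extend Δ₀ b B) := by
      funext y
      by_cases hy : y = b
      · cases hD : Δ b with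
        | none => simp [extend, union, hy, hD]
        | some D =>
          have hDB : D = B := cΔ b D B hD (by simp [extend])
          simp [extend, union, hy, hD, hDB]
      · have hcomm := congrFun (union_comm_of_compat cΔ₀) y
        simp only [extend, if_neg hy, union] at hcomm ⊢
        exact hcomm
    rw [e1, e2] at hcmd
    exact hcmd
  | @cons Γ₁ Γ₂ u h A B Δ₁ Δ₂ hu hh c1 c2 ih =>
    intro Γ t Δ hT cΓ cΔ
    have cΓ1 : Compat Γ Γ₁ := compat_union_elim₁ cΓ
    have cΔ1 : Compat Δ Δ₁ := compat_union_elim₁ cΔ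
    have happ := TT.app hT hu cΓ1 cΔ1
    have cΓ2 : Compat (union Γ Γ₁) Γ₂ :=
      compat_union_intro (compat_union_elim₂ cΓ c1) c1
    have cΔ2 : Compat (union Δ Δ₁) Δ₂ :=
      compat_union_intro (compat_union_elim₂ cΔ c2) c2
    have hfill := ih happ cΓ2 cΔ2
    rw [union_assoc, union_assoc] at hfill
    simpa [fill] using hfill

/-- Agreement of a total type assignment with an environment. -/
def Agr (Θ : ℕ → Ty) (Δ : Cx) : Prop := ∀ b B, Δ b = some B → Θ b = B

/-- The strengthened invariant relating a source environment `Δ` with the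
target environment `Δ'`. -/
def Inv (Δ Δ' : Cx) (Θ : ℕ → Ty) (N : ℕ) : Prop :=
  (∀ b B, Δ b = some B → Δ' b = some B) ∧
  ∀ b B, Δ' b = some B → (Δ b = some B ∨ (Δ b = none ∧ B = Θ b)) ∧ b < N

lemma Inv.sub {Δ Δ' : Cx} {Θ : ℕ → Ty} {N : ℕ} (h : Inv Δ Δ' Θ N) (hΘ : Agr Θ Δ)
    {b : ℕ} {B : Ty} (hb : Δ' b = some B) : Θ b = B := by
  rcases (h.2 b B hb).1 with h' | ⟨_, h'⟩
  · exact hΘ b B h'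
  · exact h'.symm

/-- Motive for λ̄μμ̃-term judgments. -/
def MT (Γ : Cx) (t : BTm) (A : Ty) (Δ : Cx) : Prop :=
  ∀ Θ : ℕ → Ty, Agr Θ Δ → ∃ Δ', Inv Δ Δ' Θ (fvMT (circT t)) ∧ TT Γ (circT t) A Δ'

/-- Motive for λ̄μμ̃-command judgments. -/
def MC (c : BCm) (Γ Δ : Cx) : Prop :=
  ∀ Θ : ℕ → Ty, Agr Θ Δ → ∃ Δ', Inv Δ Δ' Θ (fvMC (circC c)) ∧ TC (circC c) Γ Δ'

/-- Motive for λ̄μμ̃-context judgments. -/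
def ME (Γ : Cx) (e : BCt) (A : Ty) (Δ : Cx) : Prop :=
  ∀ Θ : ℕ → Ty, Agr Θ Δ → ∃ Δ', Inv Δ Δ' Θ (fvME (circE e)) ∧ TE Γ (circE e) A Δ'

lemma case_var (x : ℕ) (A : Ty) : MT (single x A) (.var x) A emp := by
  intro Θ _
  refine ⟨emp, ⟨fun b B hb => hb, fun b B hb => by simp [emp] at hb⟩, ?_⟩
  simpa [circT] using TT.var x A

lemma case_abs {Γ : Cx} {t : BTm} {B : Ty} {Δ : Cx} {x : ℕ} {A : Ty}
    (_ : BT Γ t B Δ) (hx : Γ x = some A ∨ Γ x = none) (ih : MT Γ t B Δ) :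
    MT (remove Γ x) (.abs x t) (.arr A B) Δ := by
  intro Θ hΘ
  obtain ⟨Δ', hInv, hT⟩ := ih Θ hΘ
  exact ⟨Δ', by simpa [circT, fvMT] using hInv, by simpa [circT] using TT.abs hT hx⟩

lemma case_mabs {c : BCm} {Γ Δ : Cx} {a : ℕ} {A : Ty}
    (_ : BC c Γ Δ) (ha : Δ a = some A ∨ Δ a = none) (ih : MC c Γ Δ) :
    MT Γ (.mabs a c) A (remove Δ a) := by
  intro Θ hΘ
  set Θ' : ℕ → Ty := fun b => if b = a then A else Θ b with hΘ'
  have hΘ'A : Agr Θ' Δ := by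
    intro b B hb
    by_cases hba : b = a
    · subst hba
      rcases ha with h | h
      · rw [hb] at h
        injection h with e
        simp [hΘ', e]
      · rw [hb] at h; cases h
    · have hr : remove Δ a b = some B := by simp [remove, hba, hb]
      simpa [hΘ', hba] using hΘ b B hr
  obtain ⟨Δ₀, hInv, hT⟩ := ih Θ' hΘ'A
  have ha' : Δ₀ a = some A ∨ Δ₀ a = none := by
    cases h : Δ₀ a with
    | none => exact Or.inr rfl
    | some B =>
      left
      rcases (hInv.2 a B h).1 with h' | ⟨_, h'⟩
      · rcases ha with h'' | h''
        · rw [h'] at h''; exact h''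
        · rw [h'] at h''; exact nomatch h''
      · rw [h']; simp [hΘ']
  refine ⟨remove Δ₀ a, ⟨?_, ?_⟩, by simpa [circT] using TT.mabs hT ha'⟩
  · intro b B hb
    by_cases hba : b = a
    · simp [remove, hba] at hb
    · simp only [remove, if_neg hba] at hb ⊢
      exact hInv.1 b B hb
  · intro b B hb
    by_cases hba : b = a
    · simp [remove, hba] at hb
    · simp only [remove, if_neg hba] at hb ⊢
      have h2 := hInv.2 b B hb
      refine ⟨?_, ?_⟩
      · rcases h2.1 with h | ⟨h1, h3⟩
        · exact Or.inl h
        · exact Or.inr ⟨h1, by simpa [hΘ', hba] using h3⟩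
      · have h3 := h2.2
        simp only [circT, fvMT]
        omega

lemma agr_union_left {Θ : ℕ → Ty} {Δ₁ Δ₂ : Cx} (h : Agr Θ (union Δ₁ Δ₂)) :
    Agr Θ Δ₁ := fun b B hb => h b B (union_eq_left hb)

lemma agr_union_right {Θ : ℕ → Ty} {Δ₁ Δ₂ : Cx} (h : Agr Θ (union Δ₁ Δ₂))
    (hc : Compat Δ₁ Δ₂) : Agr Θ Δ₂ := by
  intro b B hb
  cases h1 : Δ₁ b with
  | none => exact h b B (by rw [union_eq_right h1]; exact hb)
  | some C => rw [h b C (union_eq_left h1), hc b C B h1 hb]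

/-- Common kernel for the two union cases (`cut` and `cons`). -/
lemma union_inv {Δ Δ' Δ₁ Δ₂ : Cx} {Θ : ℕ → Ty} {N₁ N₂ N : ℕ}
    (cΔ : Compat Δ Δ') (hΘ : Agr Θ (union Δ Δ'))
    (h1 : Inv Δ Δ₁ Θ N₁) (h2 : Inv Δ' Δ₂ Θ N₂) (hN : max N₁ N₂ ≤ N) :
    Compat Δ₁ Δ₂ ∧ Inv (union Δ Δ') (union Δ₁ Δ₂) Θ N := by
  have hΘ1 : Agr Θ Δ := agr_union_left hΘ
  have hΘ2 : Agr Θ Δ' := agr_union_right hΘ cΔ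
  have hc : Compat Δ₁ Δ₂ := by
    intro b B C hB hC
    rw [← h1.sub hΘ1 hB, ← h2.sub hΘ2 hC]
  refine ⟨hc, ?_, ?_⟩
  · intro b B hb
    rcases union_cases hb with h | ⟨hn, h⟩
    · exact union_eq_left (h1.1 b B h)
    · have h2b := h2.1 b B h
      cases hd : Δ₁ b with
      | none => rw [union_eq_right hd]; exact h2b
      | some C =>
        have e1 : Θ b = C := h1.sub hΘ1 hd
        have e2 : Θ b = B := hΘ2 b B h
        rw [union_eq_left hd, ← e1, e2]
  · intro b B hb
    have hbound : b < N := by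
      rcases union_cases hb with h | ⟨_, h⟩
      · have := (h1.2 b B h).2; omega
      · have := (h2.2 b B h).2; omega
    refine ⟨?_, hbound⟩
    rcases union_cases hb with h | ⟨hn, h⟩
    · rcases (h1.2 b B h).1 with h' | ⟨h1', h2'⟩
      · exact Or.inl (union_eq_left h')
      · rw [union_eq_right h1']
        cases hd : Δ' b with
        | none => exact Or.inr ⟨rfl, h2'⟩
        | some C =>
          exact Or.inl (congrArg some (h2'.trans (hΘ2 b C hd)).symm)
    · have hΔb : Δ b = none := by
        cases hd : Δ b with
        | none => rfl
        | some C => simp [h1.1 b C hd] at hn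
      rw [union_eq_right hΔb]
      rcases (h2.2 b B h).1 with h' | ⟨h1', h2'⟩
      · exact Or.inl h'
      · exact Or.inr ⟨h1', h2'⟩

lemma case_cut {Γ Γ' : Cx} {t : BTm} {e : BCt} {A : Ty} {Δ Δ' : Cx}
    (_ : BT Γ t A Δ) (_ : BE Γ' e A Δ') (cΓ : Compat Γ Γ') (cΔ : Compat Δ Δ')
    (ih1 : MT Γ t A Δ) (ih2 : ME Γ' e A Δ') :
    MC (.cut t e) (union Γ Γ') (union Δ Δ') := by
  intro Θ hΘ
  obtain ⟨Δ₁, hI1, hT1⟩ := ih1 Θ (agr_union_left hΘ)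
  obtain ⟨Δ₂, hI2, hT2⟩ := ih2 Θ (agr_union_right hΘ cΔ)
  have key := union_inv (N := fvMC (circC (.cut t e))) cΔ hΘ hI1 hI2
    (by simp only [circC, fvMC_fill]; omega)
  exact ⟨union Δ₁ Δ₂, key.2, by simpa [circC] using fill_typed hT2 hT1 cΓ key.1⟩

lemma case_cvar (a : ℕ) (A : Ty) : ME emp (.cvar a) A (single a A) := by
  intro Θ _
  refine ⟨single a A, ⟨fun b B hb => hb, fun b B hb => ?_⟩, ?_⟩
  · refine ⟨Or.inl hb, ?_⟩
    have hba : b = a := by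
      by_contra hba
      simp [single, hba] at hb
    subst hba
    simp only [circE, fvME]
    omega
  · simpa [circE] using TE.cvar a A

lemma case_cons {Γ Γ' : Cx} {t : BTm} {e : BCt} {A B : Ty} {Δ Δ' : Cx}
    (_ : BT Γ t A Δ) (_ : BE Γ' e B Δ') (cΓ : Compat Γ Γ') (cΔ : Compat Δ Δ')
    (ih1 : MT Γ t A Δ) (ih2 : ME Γ' e B Δ') :
    ME (union Γ Γ') (.cons t e) (.arr A B) (union Δ Δ') := by
  intro Θ hΘ
  obtain ⟨Δ₁, hI1, hT1⟩ := ih1 Θ (agr_union_left hΘ)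
  obtain ⟨Δ₂, hI2, hT2⟩ := ih2 Θ (agr_union_right hΘ cΔ)
  have key := union_inv (N := fvME (circE (.cons t e))) cΔ hΘ hI1 hI2
    (by simp only [circE, fvME]; omega)
  exact ⟨union Δ₁ Δ₂, key.2, by simpa [circE] using TE.cons hT1 hT2 cΓ key.1⟩

lemma case_tmu {c : BCm} {Γ Δ : Cx} {x : ℕ} {A : Ty}
    (_ : BC c Γ Δ) (hx : Γ x = some A ∨ Γ x = none) (ih : MC c Γ Δ) :
    ME (remove Γ x) (.tmu x c) A Δ := by
  intro Θ hΘ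
  obtain ⟨Δ₀, hInv, hT⟩ := ih Θ hΘ
  have hE : circE (.tmu x c) =
      .push (fvMC (circC c) + 1) (.abs x (.mabs (fvMC (circC c)) (circC c))) := by
    simp [circE]
  set C := circC c with hC
  set δ := fvMC C with hδ
  set β := fvMC C + 1 with hβ
  have hΔ₀δ : Δ₀ δ = none := by
    cases h : Δ₀ δ with
    | none => rfl
    | some D => have := (hInv.2 δ D h).2; omega
  have hΔ₀β : Δ₀ β = none := by
    cases h : Δ₀ β with
    | none => rfl
    | some D => have := (hInv.2 β D h).2; omega
  have hmabs : TT Γ (.mabs δ C) (Θ β) (remove Δ₀ δ) := TT.mabs hT (Or.inr hΔ₀δ)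
  have habs := TT.abs hmabs hx
  have hpush := TE.push habs
    (Or.inr (show (remove Δ₀ δ) β = none by simp [remove, hΔ₀β]))
  rw [hE]
  refine ⟨extend (remove Δ₀ δ) β (Θ β), ⟨?_, ?_⟩, hpush⟩
  · intro b B hb
    have hb' := hInv.1 b B hb
    have hbδ : b ≠ δ := fun h => by
      rw [h, hΔ₀δ] at hb'; exact nomatch hb'
    have hbβ : b ≠ β := fun h => by
      rw [h, hΔ₀β] at hb'; exact nomatch hb'
    simp [extend, remove, hbδ, hbβ, hb']
  · intro b B hb
    by_cases hbβ : b = β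
    · simp only [extend, if_pos hbβ] at hb
      have hΔb : Δ b = none := by
        cases h : Δ b with
        | none => rfl
        | some D =>
          have h2 := hInv.1 b D h
          rw [hbβ] at h2
          simp [h2] at hΔ₀β
      refine ⟨Or.inr ⟨hΔb, ?_⟩, ?_⟩
      · injection hb with e
        rw [hbβ, ← e]
      · simp only [fvME, fvMT]
        omega
    · simp only [extend, if_neg hbβ, remove] at hb
      by_cases hbδ : b = δ
      · rw [if_pos hbδ] at hb; exact nomatch hb
      · rw [if_neg hbδ] at hb
        have h2 := hInv.2 b B hb
        refine ⟨h2.1, ?_⟩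
        have h3 := h2.2
        simp only [fvME, fvMT]
        omega

lemma main_triple :
    (∀ (Γ : Cx) (t : BTm) (A : Ty) (Δ : Cx), BT Γ t A Δ → MT Γ t A Δ) ∧
    (∀ (c : BCm) (Γ Δ : Cx), BC c Γ Δ → MC c Γ Δ) ∧
    (∀ (Γ : Cx) (e : BCt) (A : Ty) (Δ : Cx), BE Γ e A Δ → ME Γ e A Δ) :=
  ⟨fun _ _ _ _ h => BT.rec (motive_1 := fun Γ t A Δ _ => MT Γ t A Δ)
      (motive_2 := fun c Γ Δ _ => MC c Γ Δ)
      (motive_3 := fun Γ e A Δ _ => ME Γ e A Δ)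
      case_var (fun a b => case_abs a b) (fun a b => case_mabs a b)
      (fun a b c d => case_cut a b c d) case_cvar
      (fun a b c d => case_cons a b c d) (fun a b => case_tmu a b) h,
   fun _ _ _ h => BC.rec (motive_1 := fun Γ t A Δ _ => MT Γ t A Δ)
      (motive_2 := fun c Γ Δ _ => MC c Γ Δ)
      (motive_3 := fun Γ e A Δ _ => ME Γ e A Δ)
      case_var (fun a b => case_abs a b) (fun a b => case_mabs a b)
      (fun a b c d => case_cut a b c d) case_cvar
      (fun a b c d => case_cons a b c d) (fun a b => case_tmu a b) h,
   fun _ _ _ _ h => BE.rec (motive_1 := fun Γ t A Δ _ => MT Γ t A Δ)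
      (motive_2 := fun c Γ Δ _ => MC c Γ Δ)
      (motive_3 := fun Γ e A Δ _ => ME Γ e A Δ)
      case_var (fun a b => case_abs a b) (fun a b => case_mabs a b)
      (fun a b c d => case_cut a b c d) case_cvar
      (fun a b c d => case_cons a b c d) (fun a b => case_tmu a b) h⟩

end Aux

/-- the translation `(·)∘` preserves simple typing: each
derivable λ̄μμ̃ judgment for `t`, `c` or `e` yields a derivable λμ judgment
for `t∘`, `c∘` or `e∘`, possibly with extra fresh μ-variables declared in
`Δ`. -/
theorem circ_type_compatible :
    (∀ (Γ : Cx) (t : BTm) (A : Ty) (Δ : Cx), BT Γ t A Δ →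
      ∃ Δ' : Cx, Extends Δ Δ' ∧ TT Γ (circT t) A Δ') ∧
    (∀ (c : BCm) (Γ Δ : Cx), BC c Γ Δ →
      ∃ Δ' : Cx, Extends Δ Δ' ∧ TC (circC c) Γ Δ') ∧
    (∀ (Γ : Cx) (e : BCt) (A : Ty) (Δ : Cx), BE Γ e A Δ →
      ∃ Δ' : Cx, Extends Δ Δ' ∧ TE Γ (circE e) A Δ') := by

  obtain ⟨h1, h2, h3⟩ := main_triple
  refine ⟨fun Γ t A Δ h => ?_, fun c Γ Δ h => ?_, fun Γ e A Δ h => ?_⟩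
  · obtain ⟨Δ', hI, hT⟩ := h1 Γ t A Δ h (fun b => (Δ b).getD (Ty.base 0))
      (fun b B hb => by simp [hb])
    exact ⟨Δ', hI.1, hT⟩
  · obtain ⟨Δ', hI, hT⟩ := h2 c Γ Δ h (fun b => (Δ b).getD (Ty.base 0))
      (fun b B hb => by simp [hb])
    exact ⟨Δ', hI.1, hT⟩
  · obtain ⟨Δ', hI, hT⟩ := h3 Γ e A Δ h (fun b => (Δ b).getD (Ty.base 0))
      (fun b B hb => by simp [hb])
    exact ⟨Δ', hI.1, hT⟩


end CHTyping
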